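/- Let f : [−ζ, ζ] → ℝ be convex with f(ζ) = f(−ζ), let T be a random variable with values in [−ζ, ζ] and E[T] = 0, let A be an independent event with P(A) = α ∈ [0,1], and let Z take values ±ζ with probability 1/2 each, independent of T and A. Then E[f(T·1_{A^c} + Z·1_A)] ≥ E[f(T)]. -/

import Mathlib

open MeasureTheory ProbabilityTheory

lemma aux_ub {ζ : ℝ} (hζ : 0 < ζ) {f : ℝ → ℝ}
    (hfconv : ConvexOn ℝ (Set.Icc (-ζ) ζ) f) (hend : f ζ = f (-ζ)) :
    ∀ t ∈ Set.Icc (-ζ) ζ, f t ≤ f ζ := by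
  intro t ht
  obtain ⟨h1, h2⟩ := ht
  have ha : (0:ℝ) ≤ (ζ - t) / (2 * ζ) := by
    apply div_nonneg <;> linarith
  have hb : (0:ℝ) ≤ (t + ζ) / (2 * ζ) := by
    apply div_nonneg <;> linarith
  have hab : (ζ - t) / (2 * ζ) + (t + ζ) / (2 * ζ) = 1 := by
    field_simp
    ring
  have key := hfconv.2 (Set.mem_Icc.2 ⟨le_refl (-ζ), by linarith⟩)
    (Set.mem_Icc.2 ⟨by linarith, le_refl ζ⟩) ha hb hab
  have heq : ((ζ - t) / (2 * ζ)) • (-ζ) + ((t + ζ) / (2 * ζ)) • ζ = t := by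
    rw [smul_eq_mul, smul_eq_mul]
    field_simp
    ring
  rw [heq] at key
  calc f t ≤ (ζ - t) / (2 * ζ) * f (-ζ) + (t + ζ) / (2 * ζ) * f ζ := key
    _ = ((ζ - t) / (2 * ζ) + (t + ζ) / (2 * ζ)) * f ζ := by rw [← hend]; ring
    _ = f ζ := by rw [hab, one_mul]

lemma aux_lb {ζ : ℝ} (hζ : 0 < ζ) {f : ℝ → ℝ}
    (hfconv : ConvexOn ℝ (Set.Icc (-ζ) ζ) f) (hend : f ζ = f (-ζ)) :
    ∀ t ∈ Set.Icc (-ζ) ζ, 2 * f 0 - f ζ ≤ f t := by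
  intro t ht
  obtain ⟨h1, h2⟩ := ht
  have hmem : -t ∈ Set.Icc (-ζ) ζ := Set.mem_Icc.2 ⟨by linarith, by linarith⟩
  have key := hfconv.2 (Set.mem_Icc.2 ⟨h1, h2⟩) hmem (by norm_num : (0:ℝ) ≤ 1/2)
    (by norm_num : (0:ℝ) ≤ 1/2) (by norm_num)
  have heq : (1/2 : ℝ) • t + (1/2 : ℝ) • (-t) = 0 := by
    rw [smul_eq_mul, smul_eq_mul]; ring
  rw [heq] at key
  simp only [smul_eq_mul] at key
  have := aux_ub hζ hfconv hend (-t) hmem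
  linarith

theorem stmt14 {Ω : Type*} {mΩ : MeasurableSpace Ω} (μ : Measure Ω) [IsProbabilityMeasure μ]
    (T Z : Ω → ℝ) (hTm : Measurable T) (hZm : Measurable Z)
    (A : Set Ω) (hAm : MeasurableSet A)
    (hindep : iIndepFun
      ![T, Z, A.indicator (fun _ => (1:ℝ))] μ)
    (ζ : ℝ) (hζ : 0 < ζ)
    (f : ℝ → ℝ) (hfm : Measurable f)
    (hfconv : ConvexOn ℝ (Set.Icc (-ζ) ζ) f)
    (hend : f ζ = f (-ζ))
    (hTrange : ∀ᵐ ω ∂μ, T ω ∈ Set.Icc (-ζ) ζ)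
    (hTmean : ∫ ω, T ω ∂μ = 0)
    (α : ℝ) (hα : α ∈ Set.Icc (0:ℝ) 1) (hPA : μ A = ENNReal.ofReal α)
    (hZ1 : μ {ω | Z ω = ζ} = 1/2) (hZ2 : μ {ω | Z ω = -ζ} = 1/2) :
    (∫ ω, f (T ω) ∂μ)
      ≤ ∫ ω, f (Aᶜ.indicator T ω + A.indicator Z ω) ∂μ := by
  obtain ⟨hα0, hα1⟩ := hα
  set ind : Ω → ℝ := A.indicator (fun _ => (1:ℝ)) with hind_def
  have hindm : Measurable ind := measurable_const.indicator hAm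
  -- bound on f over the interval
  set M : ℝ := max |f ζ| |2 * f 0 - f ζ| with hM_def
  have hbd : ∀ t ∈ Set.Icc (-ζ) ζ, |f t| ≤ M := by
    intro t ht
    have h1 := aux_ub hζ hfconv hend t ht
    have h2 := aux_lb hζ hfconv hend t ht
    rw [abs_le]
    constructor
    · have : -( |2 * f 0 - f ζ| ) ≤ 2 * f 0 - f ζ := neg_abs_le _
      have hM2 : |2 * f 0 - f ζ| ≤ M := le_max_right _ _
      linarith
    · have : f ζ ≤ |f ζ| := le_abs_self _
      have hM1 : |f ζ| ≤ M := le_max_left _ _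
      linarith
  -- integrability of f ∘ T
  have hfT_aesm : AEStronglyMeasurable (fun ω => f (T ω)) μ :=
    (hfm.comp hTm).aestronglyMeasurable
  have hfT_bd : ∀ᵐ ω ∂μ, ‖f (T ω)‖ ≤ M := by
    filter_upwards [hTrange] with ω hω using hbd _ hω
  have hintT : Integrable (fun ω => f (T ω)) μ :=
    Integrable.mono' (integrable_const M) hfT_aesm hfT_bd
  -- Z takes values ±ζ almost surely
  have hS1m : MeasurableSet {ω | Z ω = ζ} := hZm (measurableSet_singleton ζ)
  have hS2m : MeasurableSet {ω | Z ω = -ζ} := hZm (measurableSet_singleton (-ζ))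
  have hdisj : Disjoint {ω | Z ω = ζ} {ω | Z ω = -ζ} := by
    rw [Set.disjoint_left]
    intro ω h1 h2
    simp only [Set.mem_setOf_eq] at h1 h2
    rw [h1] at h2; linarith
  have hunion : μ ({ω | Z ω = ζ} ∪ {ω | Z ω = -ζ}) = 1 := by
    rw [measure_union hdisj hS2m, hZ1, hZ2]
    rw [ENNReal.add_halves]
  have hZae : ∀ᵐ ω ∂μ, Z ω = ζ ∨ Z ω = -ζ := by
    rw [ae_iff]
    have : {ω | ¬(Z ω = ζ ∨ Z ω = -ζ)} = ({ω | Z ω = ζ} ∪ {ω | Z ω = -ζ})ᶜ := by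
      ext ω; simp [not_or]
    rw [this, measure_compl (hS1m.union hS2m) (measure_ne_top μ _), hunion,
      measure_univ, tsub_self]
  -- f ∘ Z equals a simple function a.e.
  set g : Ω → ℝ := fun ω => {ω | Z ω = ζ}.indicator (fun _ => f ζ) ω
      + {ω | Z ω = -ζ}.indicator (fun _ => f (-ζ)) ω with hg_def
  have hfZ_ae : (fun ω => f (Z ω)) =ᵐ[μ] g := by
    filter_upwards [hZae] with ω hω
    rcases hω with h | h
    · have hns : ω ∉ {ω | Z ω = -ζ} := by
        simp only [Set.mem_setOf_eq]; rw [h]; intro hc; linarith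
      simp [hg_def, Set.indicator_of_mem (show ω ∈ {ω | Z ω = ζ} from h),
        Set.indicator_of_notMem hns, h]
    · have hns : ω ∉ {ω | Z ω = ζ} := by
        simp only [Set.mem_setOf_eq]; rw [h]; intro hc; linarith
      simp [hg_def, Set.indicator_of_mem (show ω ∈ {ω | Z ω = -ζ} from h),
        Set.indicator_of_notMem hns, h]
  have hint_g : Integrable g μ := by
    apply Integrable.add
    · exact (integrable_const (f ζ)).indicator hS1m
    · exact (integrable_const (f (-ζ))).indicator hS2m
  have hintZ : Integrable (fun ω => f (Z ω)) μ :=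
    (integrable_congr hfZ_ae).2 hint_g
  have hEZ : ∫ ω, f (Z ω) ∂μ = f ζ := by
    rw [integral_congr_ae hfZ_ae, hg_def]
    rw [integral_add ((integrable_const (f ζ)).indicator hS1m)
      ((integrable_const (f (-ζ))).indicator hS2m)]
    rw [integral_indicator_const _ hS1m, integral_indicator_const _ hS2m, measureReal_def, measureReal_def, hZ1, hZ2]
    rw [← hend]
    norm_num
    ring
  -- independence facts
  have hTI : IndepFun T ind μ := by
    have := hindep.indepFun (show (0 : Fin 3) ≠ 2 by decide)
    simpa using this
  have hZI : IndepFun Z ind μ := by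
    have := hindep.indepFun (show (1 : Fin 3) ≠ 2 by decide)
    simpa using this
  have hfT_ind : IndepFun (fun ω => f (T ω)) (fun ω => 1 - ind ω) μ := by
    have := hTI.comp hfm (show Measurable (fun x : ℝ => 1 - x) from
      measurable_id.const_sub 1)
    exact this
  have hfZ_ind : IndepFun (fun ω => f (Z ω)) ind μ := by
    have := hZI.comp hfm (measurable_id (α := ℝ))
    exact this
  -- integrals of the indicator pieces
  have hEind : ∫ ω, ind ω ∂μ = α := by
    rw [hind_def]
    rw [integral_indicator_const _ hAm, measureReal_def, hPA, smul_eq_mul, mul_one,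
      ENNReal.toReal_ofReal hα0]
  have hEind' : ∫ ω, (1 - ind ω) ∂μ = 1 - α := by
    rw [integral_sub (integrable_const 1) ?_, hEind]
    · simp
    · exact (integrable_const (1:ℝ)).indicator hAm |>.congr (by rfl)
  -- split the target integral
  have hsplit : (fun ω => f (Aᶜ.indicator T ω + A.indicator Z ω))
      = fun ω => f (T ω) * (1 - ind ω) + f (Z ω) * ind ω := by
    funext ω
    by_cases h : ω ∈ A
    · simp [hind_def, Set.indicator_of_mem h, Set.indicator_of_notMem (by simpa using h : ω ∉ Aᶜ)]
    · simp [hind_def, Set.indicator_of_notMem h, Set.indicator_of_mem (by simpa using h : ω ∈ Aᶜ)]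
  have hint1 : Integrable (fun ω => f (T ω) * (1 - ind ω)) μ := by
    have : Integrable (fun ω => (1 - ind ω) * f (T ω)) μ := by
      apply hintT.bdd_mul (c := 1) ((measurable_const.sub hindm)).aestronglyMeasurable
      refine Filter.Eventually.of_forall fun ω => ?_
      by_cases h : ω ∈ A <;>
        simp [hind_def, Set.indicator_of_mem, Set.indicator_of_notMem, h]
    exact this.congr (by filter_upwards with ω; ring)
  have hint2 : Integrable (fun ω => f (Z ω) * ind ω) μ := by
    have : Integrable (fun ω => ind ω * f (Z ω)) μ := by
      apply hintZ.bdd_mul (c := 1) hindm.aestronglyMeasurable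
      refine Filter.Eventually.of_forall fun ω => ?_
      by_cases h : ω ∈ A <;>
        simp [hind_def, Set.indicator_of_mem, Set.indicator_of_notMem, h]
    exact this.congr (by filter_upwards with ω; ring)
  have hmul1 : ∫ ω, f (T ω) * (1 - ind ω) ∂μ
      = (∫ ω, f (T ω) ∂μ) * (1 - α) := by
    have := hfT_ind.integral_mul_eq_mul_integral hfT_aesm
      ((measurable_const.sub hindm)).aestronglyMeasurable
    rw [show ((fun ω => f (T ω)) * fun ω => 1 - ind ω)
        = fun ω => f (T ω) * (1 - ind ω) from rfl] at this
    rw [this, hEind']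
  have hmul2 : ∫ ω, f (Z ω) * ind ω ∂μ = f ζ * α := by
    have := hfZ_ind.integral_mul_eq_mul_integral (hfm.comp hZm).aestronglyMeasurable
      hindm.aestronglyMeasurable
    rw [show ((fun ω => f (Z ω)) * ind) = fun ω => f (Z ω) * ind ω from rfl] at this
    rw [this, hEZ, hEind]
  have hET_le : ∫ ω, f (T ω) ∂μ ≤ f ζ := by
    calc ∫ ω, f (T ω) ∂μ ≤ ∫ _ω, f ζ ∂μ := by
          apply integral_mono_ae hintT (integrable_const _)
          filter_upwards [hTrange] with ω hω using aux_ub hζ hfconv hend _ hω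
      _ = f ζ := by simp
  rw [hsplit, integral_add hint1 hint2, hmul1, hmul2]
  nlinarith [hα0, hα1, hET_le]
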